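/- Let A ∈ ℝ^{n×n}, V ∈ ℝ^{n×N}, T ∈ ℝ^{N×N}, and W ∈ ℝ^{n×N} satisfy A·V = V·T + W. Let E₁ ∈ ℝ^{N×p} denote the first p columns of the N×N identity matrix, let Γ ∈ ℝ^{p×p}, and set V₁ := V·E₁. Then for every t ≥ 0, exp(tA)·V₁·Γ − V·exp(tT)·E₁·Γ = ∫₀ᵗ exp((t−s)A)·W·exp(sT)·E₁·Γ ds, where exp denotes the matrix exponential. -/

import Mathlib

open Matrix

/-- The `N × q` matrix consisting of the first `q` columns of the `N × N` identity matrix. -/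
def firstCols (N q : ℕ) : Matrix (Fin N) (Fin q) ℝ :=
  Matrix.of fun i j => if (i : ℕ) = (j : ℕ) then 1 else 0

private lemma entry_nnnorm_le {m : ℕ}
    (M : Matrix (Fin m) (Fin m) ℝ) (a b : Fin m) :
    letI : SeminormedRing (Matrix (Fin m) (Fin m) ℝ) := Matrix.linftyOpSemiNormedRing
    ‖M a b‖₊ ≤ ‖M‖₊ := by
  letI : SeminormedRing (Matrix (Fin m) (Fin m) ℝ) := Matrix.linftyOpSemiNormedRing
  rw [Matrix.linfty_opNNNorm_def]
  exact le_trans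
    (Finset.single_le_sum (f := fun c => ‖M a c‖₊) (fun _ _ => zero_le) (Finset.mem_univ b))
    (Finset.le_sup (f := fun r => ∑ c, ‖M r c‖₊) (Finset.mem_univ a))

private lemma expEntryDeriv {m q : ℕ} (M : Matrix (Fin m) (Fin m) ℝ) (B : Matrix (Fin m) (Fin q) ℝ)
    (i : Fin m) (j : Fin q) (s : ℝ) :
    HasDerivAt (fun u : ℝ => (NormedSpace.exp (u • M) * B) i j)
      ((NormedSpace.exp (s • M) * M * B) i j) s := by
  letI : SeminormedRing (Matrix (Fin m) (Fin m) ℝ) := Matrix.linftyOpSemiNormedRing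
  letI : NormedRing (Matrix (Fin m) (Fin m) ℝ) := Matrix.linftyOpNormedRing
  letI : NormedAlgebra ℝ (Matrix (Fin m) (Fin m) ℝ) := Matrix.linftyOpNormedAlgebra
  letI : CompleteSpace (Matrix (Fin m) (Fin m) ℝ) :=
    (by infer_instance : CompleteSpace (Matrix (Fin m) (Fin m) ℝ))
  have hb : ∀ (X : Matrix (Fin m) (Fin m) ℝ) (a b : Fin m), ‖X a b‖ ≤ ‖X‖ := by
    intro X a b
    have := entry_nnnorm_le X a b
    exact_mod_cast this
  let L : Matrix (Fin m) (Fin m) ℝ →ₗ[ℝ] ℝ :=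
    { toFun := fun X => (X * B) i j
      map_add' := fun x y => by simp [Matrix.add_mul]
      map_smul' := fun c x => by simp [Matrix.smul_mul] }
  have hLb : ∀ X : Matrix (Fin m) (Fin m) ℝ, ‖L X‖ ≤ (∑ l, ‖B l j‖) * ‖X‖ := by
    intro X
    calc ‖L X‖ = ‖∑ l, X i l * B l j‖ := by rw [show L X = (X * B) i j from rfl, Matrix.mul_apply]
      _ ≤ ∑ l, ‖X i l * B l j‖ := norm_sum_le _ _
      _ = ∑ l, ‖X i l‖ * ‖B l j‖ := by simp [norm_mul]
      _ ≤ ∑ l, ‖X‖ * ‖B l j‖ :=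
          Finset.sum_le_sum fun l _ => mul_le_mul_of_nonneg_right (hb X i l) (norm_nonneg _)
      _ = (∑ l, ‖B l j‖) * ‖X‖ := by rw [← Finset.mul_sum, mul_comm]
  let e : Matrix (Fin m) (Fin m) ℝ →L[ℝ] ℝ := LinearMap.mkContinuous L _ hLb
  exact e.hasFDerivAt.comp_hasDerivAt s (hasDerivAt_exp_smul_const (𝕂 := ℝ) M s)

private lemma expEntryDerivRev {m q : ℕ} (M : Matrix (Fin m) (Fin m) ℝ)
    (B : Matrix (Fin m) (Fin q) ℝ) (i : Fin m) (j : Fin q) (t s : ℝ) :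
    HasDerivAt (fun u : ℝ => (NormedSpace.exp ((t - u) • M) * B) i j)
      (-((NormedSpace.exp ((t - s) • M) * M * B) i j)) s := by
  have h2 : HasDerivAt (fun u : ℝ => t - u) (-1 : ℝ) s := by
    simpa using (hasDerivAt_id s).const_sub t
  have h1 := expEntryDeriv M B i j (t - s)
  have := h1.comp s h2
  simpa [Function.comp_def] using this

private lemma exp_comm {m : ℕ} (M : Matrix (Fin m) (Fin m) ℝ) (s : ℝ) :
    NormedSpace.exp (s • M) * M = M * NormedSpace.exp (s • M) :=
  (((Commute.refl M).smul_right s).exp_right).eq.symm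

/-- If `A·V = V·T + W`, then for every `t ≥ 0` and `V₁ := V·E₁`,
`exp(tA)·V₁·Γ − V·exp(tT)·E₁·Γ = ∫₀ᵗ exp((t−s)A)·W·exp(sT)·E₁·Γ ds` (entrywise). -/
theorem error_integral_representation
    (n p N : ℕ) (hn : 0 < n) (hp : 0 < p) (hN : 0 < N)
    (A : Matrix (Fin n) (Fin n) ℝ)
    (V W : Matrix (Fin n) (Fin N) ℝ)
    (T : Matrix (Fin N) (Fin N) ℝ)
    (hdec : A * V = V * T + W)
    (Γ : Matrix (Fin p) (Fin p) ℝ)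
    (t : ℝ) (ht : 0 ≤ t) :
    ∀ i j,
      (NormedSpace.exp (t • A) * (V * firstCols N p) * Γ
        - V * NormedSpace.exp (t • T) * firstCols N p * Γ) i j
      = ∫ s in (0 : ℝ)..t,
          (NormedSpace.exp ((t - s) • A) * W * NormedSpace.exp (s • T)
            * firstCols N p * Γ) i j := by
  intro i j
  set C : Matrix (Fin N) (Fin p) ℝ := firstCols N p * Γ with hC
  have hL1 : NormedSpace.exp (t • A) * (V * firstCols N p) * Γ
      = NormedSpace.exp (t • A) * V * C := by simp [hC, Matrix.mul_assoc]
  have hL2 : V * NormedSpace.exp (t • T) * firstCols N p * Γ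
      = V * (NormedSpace.exp (t • T) * C) := by simp [hC, Matrix.mul_assoc]
  have hInt : ∀ s : ℝ,
      NormedSpace.exp ((t - s) • A) * W * NormedSpace.exp (s • T) * firstCols N p * Γ
      = NormedSpace.exp ((t - s) • A) * W * (NormedSpace.exp (s • T) * C) := fun s => by
    simp [hC, Matrix.mul_assoc]
  rw [hL1, hL2]
  simp only [hInt]
  -- derivative of the interpolating entry function
  have hder : ∀ (B : Matrix (Fin n) (Fin N) ℝ) (s : ℝ),
      HasDerivAt
        (fun u : ℝ =>
          (NormedSpace.exp ((t - u) • A) * B * (NormedSpace.exp (u • T) * C)) i j)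
        (((-(NormedSpace.exp ((t - s) • A) * A * B)) * (NormedSpace.exp (s • T) * C)
            + (NormedSpace.exp ((t - s) • A) * B)
              * (NormedSpace.exp (s • T) * T * C)) i j) s := by
    intro B s
    have heq : (fun u : ℝ =>
        (NormedSpace.exp ((t - u) • A) * B * (NormedSpace.exp (u • T) * C)) i j)
        = fun u : ℝ => ∑ k, (NormedSpace.exp ((t - u) • A) * B) i k
            * (NormedSpace.exp (u • T) * C) k j :=
      funext fun u => Matrix.mul_apply
    have hsum : ((-(NormedSpace.exp ((t - s) • A) * A * B)) * (NormedSpace.exp (s • T) * C)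
          + (NormedSpace.exp ((t - s) • A) * B) * (NormedSpace.exp (s • T) * T * C)) i j
        = ∑ k, (-((NormedSpace.exp ((t - s) • A) * A * B) i k)
              * (NormedSpace.exp (s • T) * C) k j
            + (NormedSpace.exp ((t - s) • A) * B) i k
              * ((NormedSpace.exp (s • T) * T * C) k j)) := by
      rw [Matrix.add_apply, Matrix.mul_apply, Matrix.mul_apply, ← Finset.sum_add_distrib]
      exact Finset.sum_congr rfl fun k _ => by rw [Matrix.neg_apply]
    rw [heq, hsum]
    exact HasDerivAt.fun_sum fun k _ =>
      (expEntryDerivRev A B i k t s).mul (expEntryDeriv T C k j s)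
  -- the matrix-level algebraic identity
  have hM : ∀ s : ℝ,
      (-(NormedSpace.exp ((t - s) • A) * A * V)) * (NormedSpace.exp (s • T) * C)
        + (NormedSpace.exp ((t - s) • A) * V) * (NormedSpace.exp (s • T) * T * C)
      = -(NormedSpace.exp ((t - s) • A) * W * (NormedSpace.exp (s • T) * C)) := by
    intro s
    have hcomm := exp_comm T s
    have h1 : NormedSpace.exp ((t - s) • A) * A * V
        = NormedSpace.exp ((t - s) • A) * (V * T) + NormedSpace.exp ((t - s) • A) * W := by
      rw [Matrix.mul_assoc, hdec, Matrix.mul_add]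
    have h2 : (NormedSpace.exp ((t - s) • A) * V) * (NormedSpace.exp (s • T) * T * C)
        = (NormedSpace.exp ((t - s) • A) * (V * T)) * (NormedSpace.exp (s • T) * C) := by
      rw [hcomm]; simp [Matrix.mul_assoc]
    rw [h2, Matrix.neg_mul, h1, Matrix.add_mul]
    abel
  -- FTC
  have hg : ∀ s : ℝ, HasDerivAt
      (fun u : ℝ =>
        -((NormedSpace.exp ((t - u) • A) * V * (NormedSpace.exp (u • T) * C)) i j))
      ((NormedSpace.exp ((t - s) • A) * W * (NormedSpace.exp (s • T) * C)) i j) s := by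
    intro s
    have h := (hder V s).neg
    rw [hM s, Matrix.neg_apply, neg_neg] at h
    exact h
  have hcont : Continuous fun s : ℝ =>
      (NormedSpace.exp ((t - s) • A) * W * (NormedSpace.exp (s • T) * C)) i j :=
    continuous_iff_continuousAt.mpr fun s => (hder W s).continuousAt
  have key := intervalIntegral.integral_eq_sub_of_hasDerivAt
    (f := fun u : ℝ =>
      -((NormedSpace.exp ((t - u) • A) * V * (NormedSpace.exp (u • T) * C)) i j))
    (f' := fun s : ℝ =>
      (NormedSpace.exp ((t - s) • A) * W * (NormedSpace.exp (s • T) * C)) i j)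
    (fun s _ => hg s) (hcont.intervalIntegrable 0 t)
  rw [key]
  simp [Matrix.sub_apply, NormedSpace.exp_zero]
  abel
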